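/- arXiv:2405.03856 — 3 statements merged into one kernel-verified Lean document; each statement's English description precedes it below -/
import Mathlib

section
/- Let T be a tree and a, b, c, d four (not necessarily distinct) vertices of T. Then {a,b,c,d} can be partitioned into two pairs {x,y} and {x',y'} such that the path in T from x to y and the path in T from x' to y' are edge-disjoint. -/
open SimpleGraph

/-- Split a walk at a dart: lengths add up. -/
lemma split_at_dart {V : Type} {G : SimpleGraph V} {x y : V} (p : G.Walk x y)
    {d : G.Dart} (hd : d ∈ p.darts) :
    ∃ (q : G.Walk x d.fst) (r : G.Walk d.snd y),
      q.length + 1 + r.length = p.length := by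
  induction p with
  | nil => simp at hd
  | cons h p ih =>
    rw [SimpleGraph.Walk.darts_cons, List.mem_cons] at hd
    rcases hd with rfl | hd
    · exact ⟨SimpleGraph.Walk.nil, p, by simp [Nat.add_comm]⟩
    · obtain ⟨q, r, hqr⟩ := ih hd
      exact ⟨SimpleGraph.Walk.cons h q, r, by simp [SimpleGraph.Walk.length_cons]; omega⟩

/-- In a tree, a path realizes the distance. -/
lemma path_length_eq_dist {V : Type} {T : SimpleGraph V} (hT : T.IsTree)
    {x y : V} (p : T.Walk x y) (hp : p.IsPath) : p.length = T.dist x y := by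
  obtain ⟨q, hq, hlen⟩ := (hT.isConnected.1 x y).exists_path_of_dist
  have := hT.IsAcyclic.path_unique ⟨p, hp⟩ ⟨q, hq⟩
  rw [← hlen]
  exact congrArg SimpleGraph.Walk.length (congrArg Subtype.val this)

/-- If two paths share an edge, one of the two cross pairings has strictly
smaller total distance. -/
lemma share_imp {V : Type} {T : SimpleGraph V} (hT : T.IsTree)
    {a b c d : V} (p : T.Walk a b) (q : T.Walk c d) (hp : p.IsPath) (hq : q.IsPath)
    {e : Sym2 V} (hep : e ∈ p.edges) (heq : e ∈ q.edges) :
    T.dist a c + T.dist b d + 2 ≤ T.dist a b + T.dist c d ∨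
    T.dist a d + T.dist b c + 2 ≤ T.dist a b + T.dist c d := by
  obtain ⟨d1, hd1, he1⟩ := List.mem_map.mp hep
  obtain ⟨d2, hd2, he2⟩ := List.mem_map.mp heq
  obtain ⟨q1, r1, h1⟩ := split_at_dart p hd1
  obtain ⟨q2, r2, h2⟩ := split_at_dart q hd2
  have hpl := path_length_eq_dist hT p hp
  have hql := path_length_eq_dist hT q hq
  have hau : T.dist a d1.fst ≤ q1.length := SimpleGraph.dist_le q1
  have hvb : T.dist d1.snd b ≤ r1.length := SimpleGraph.dist_le r1
  have hcu : T.dist c d2.fst ≤ q2.length := SimpleGraph.dist_le q2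
  have hvd : T.dist d2.snd d ≤ r2.length := SimpleGraph.dist_le r2
  have htri := hT.isConnected
  -- d1.edge = d2.edge, so either same orientation or opposite
  have hee : s(d1.toProd.1, d1.toProd.2) = s(d2.toProd.1, d2.toProd.2) := by
    have h := he1.trans he2.symm
    simpa [SimpleGraph.Dart.edge] using h
  rw [Sym2.eq_iff] at hee
  rcases hee with ⟨h11, h12⟩ | ⟨h11, h12⟩
  · left
    have t1 : T.dist a c ≤ T.dist a d1.fst + T.dist d1.fst c := htri.dist_triangle
    have t2 : T.dist b d ≤ T.dist b d1.snd + T.dist d1.snd d := htri.dist_triangle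
    have e1 : T.dist d1.fst c = T.dist c d2.fst := by rw [h11, SimpleGraph.dist_comm]
    have e2 : T.dist b d1.snd = T.dist d1.snd b := SimpleGraph.dist_comm ..
    have e3 : T.dist d1.snd d = T.dist d2.snd d := by rw [h12]
    omega
  · right
    have t1 : T.dist a d ≤ T.dist a d1.fst + T.dist d1.fst d := htri.dist_triangle
    have t2 : T.dist b c ≤ T.dist b d1.snd + T.dist d1.snd c := htri.dist_triangle
    have e1 : T.dist d1.fst d = T.dist d2.snd d := by rw [h11]
    have e2 : T.dist b d1.snd = T.dist d1.snd b := SimpleGraph.dist_comm ..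
    have e3 : T.dist d1.snd c = T.dist c d2.fst := by rw [h12, SimpleGraph.dist_comm]
    omega

/-- Let `T` be a tree and `a, b, c, d` four (not necessarily distinct)
vertices of `T`. Then `{a,b,c,d}` can be partitioned into two pairs `{x,y}`
and `{x',y'}` such that the path in `T` from `x` to `y` and the path in `T`
from `x'` to `y'` are edge-disjoint. -/
theorem exists_edge_disjoint_pairing {V : Type} (T : SimpleGraph V) (hT : T.IsTree)
    (a b c d : V) :
    (∀ (p : T.Walk a b) (q : T.Walk c d), p.IsPath → q.IsPath →
      ∀ e, e ∈ p.edges → e ∉ q.edges) ∨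
    (∀ (p : T.Walk a c) (q : T.Walk b d), p.IsPath → q.IsPath →
      ∀ e, e ∈ p.edges → e ∉ q.edges) ∨
    (∀ (p : T.Walk a d) (q : T.Walk b c), p.IsPath → q.IsPath →
      ∀ e, e ∈ p.edges → e ∉ q.edges) := by
  by_contra h
  push_neg at h
  obtain ⟨⟨p1, q1, hp1, hq1, e1, he1p, he1q⟩, ⟨p2, q2, hp2, hq2, e2, he2p, he2q⟩,
    ⟨p3, q3, hp3, hq3, e3, he3p, he3q⟩⟩ := h
  have H1 := share_imp hT p1 q1 hp1 hq1 he1p he1q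
  have H2 := share_imp hT p2 q2 hp2 hq2 he2p he2q
  have H3 := share_imp hT p3 q3 hp3 hq3 he3p he3q
  have c1 : T.dist c b = T.dist b c := SimpleGraph.dist_comm ..
  have c2 : T.dist b d = T.dist d b := SimpleGraph.dist_comm ..
  have c3 : T.dist c d = T.dist d c := SimpleGraph.dist_comm ..
  have c4 : T.dist a c = T.dist c a := SimpleGraph.dist_comm ..
  omega
end

section
/- Let G be a cubic multigraph containing a double edge between v and w (two parallel edges f1, f2), with remaining incident edges {a,v} and {b,w} where a ≠ w and b ≠ v. Let H be obtained from G by deleting v and w (and all four incident edges) and adding an edge {a,b}. If M' is a perfect matching of H with {a,b} ∉ M', then M = M' ∪ {f1} is a perfect matching of G. Moreover, if G is bridgeless then so is H. -/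
/-- A multigraph on vertex type `V` with edge type `E`: each edge has an
unordered pair of endpoints (loops and parallel edges are allowed). -/
structure Multigraph (V : Type) (E : Type) where
  ends : E → Sym2 V

namespace Multigraph

variable {V E : Type} (G : Multigraph V E)

/-- A single step along an edge of the edge set `ES`. -/
def Step (ES : Set E) (x y : V) : Prop := ∃ e ∈ ES, G.ends e = s(x, y)

/-- `x` and `y` are joined by a walk using only edges of `ES`. -/
def LinkedOn (ES : Set E) (x y : V) : Prop := Relation.ReflTransGen (G.Step ES) x y

/-- All edges of `ES` have both endpoints in `VS`. -/
def EdgesWithin (VS : Set V) (ES : Set E) : Prop := ∀ e ∈ ES, ∀ x ∈ G.ends e, x ∈ VS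

/-- The subgraph with vertex set `VS` and edge set `ES` is connected. -/
def ConnectedOn (VS : Set V) (ES : Set E) : Prop :=
  G.EdgesWithin VS ES ∧ ∀ x ∈ VS, ∀ y ∈ VS, G.LinkedOn ES x y

/-- The degree of `v` in the edge set `ES`; a loop at `v` counts twice. -/
noncomputable def degOn (ES : Set E) (v : V) : ℕ :=
  {e ∈ ES | v ∈ G.ends e}.ncard + {e ∈ ES | G.ends e = s(v, v)}.ncard

/-- The subgraph `(VS, ES)` is cubic: every vertex has degree exactly `3`. -/
def CubicOn (VS : Set V) (ES : Set E) : Prop :=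
  G.EdgesWithin VS ES ∧ ∀ v ∈ VS, G.degOn ES v = 3

/-- `f` is a bridge of the subgraph `(VS, ES)`: removing it disconnects two
vertices of `VS` that were connected. -/
def IsBridgeOn (VS : Set V) (ES : Set E) (f : E) : Prop :=
  f ∈ ES ∧ ∃ x ∈ VS, ∃ y ∈ VS, G.LinkedOn ES x y ∧ ¬ G.LinkedOn (ES \ {f}) x y

/-- The subgraph `(VS, ES)` has no bridge. -/
def BridgelessOn (VS : Set V) (ES : Set E) : Prop := ∀ f, ¬ G.IsBridgeOn VS ES f

/-- `M` is a perfect matching of the subgraph `(VS, ES)`: a set of non-loop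
edges such that every vertex of `VS` is incident to exactly one edge of `M`. -/
def IsPerfectMatchingOn (VS : Set V) (ES : Set E) (M : Set E) : Prop :=
  M ⊆ ES ∧ (∀ e ∈ M, ¬ (G.ends e).IsDiag) ∧ ∀ v ∈ VS, ∃! e, e ∈ M ∧ v ∈ G.ends e

/-- `T` is a spanning tree of the subgraph `(VS, ES)`: it is a connected
spanning subgraph in which every edge is essential (i.e. it is acyclic). -/
def IsSpanningTreeOn (VS : Set V) (ES : Set E) (T : Set E) : Prop :=
  T ⊆ ES ∧ G.ConnectedOn VS T ∧ ∀ f ∈ T, ¬ G.ConnectedOn VS (T \ {f})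

/-- The non-tree edge `e` covers the tree edge `f` of the spanning tree `T`:
`f` lies on the path in `T` connecting the endpoints of `e`, i.e. the
endpoints of `e` get disconnected in `T` after removing `f`. -/
def Covers (T : Set E) (e f : E) : Prop :=
  f ∈ T ∧ e ∉ T ∧ ∃ x y, G.ends e = s(x, y) ∧ ¬ G.LinkedOn (T \ {f}) x y

/-- `A` is an `M`-alternating cycle: a nonempty connected set of non-loop
edges in which every vertex incident to `A` is incident to exactly one edge
of `A ∩ M` and exactly one edge of `A \ M`. -/
def IsAlternatingCycle (M A : Set E) : Prop :=
  A.Nonempty ∧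
  (∀ e ∈ A, ¬ (G.ends e).IsDiag) ∧
  (∀ v, (∃ e ∈ A, v ∈ G.ends e) →
    (∃! e, e ∈ A ∩ M ∧ v ∈ G.ends e) ∧ (∃! e, e ∈ A \ M ∧ v ∈ G.ends e)) ∧
  (∀ x y, (∃ e ∈ A, x ∈ G.ends e) → (∃ e ∈ A, y ∈ G.ends e) → G.LinkedOn A x y)

end Multigraph

namespace Multigraph

lemma linkedOn_lift' {V E E' : Type} {G : Multigraph V E} {G' : Multigraph V E'}
    {S : Set E} {S' : Set E'} (π : V → V)
    (h : ∀ x y, G.Step S x y → G'.LinkedOn S' (π x) (π y)) {x y : V}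
    (hxy : G.LinkedOn S x y) : G'.LinkedOn S' (π x) (π y) := by
  induction hxy with
  | refl => exact .refl
  | tail _ hstep ih => exact ih.trans (h _ _ hstep)

lemma linkedOn_symm {V E : Type} {G : Multigraph V E} {S : Set E} {x y : V}
    (h : G.LinkedOn S x y) : G.LinkedOn S y x := by
  refine (@Relation.ReflTransGen.stdSymm _ (G.Step S) ⟨?_⟩).symm _ _ h
  rintro u v' ⟨e, he, hee⟩
  exact ⟨e, he, by rw [hee, Sym2.eq_swap]⟩

lemma step_single {V E : Type} {G : Multigraph V E} {S : Set E} {x y : V} {e : E}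
    (he : e ∈ S) (hee : G.ends e = s(x, y)) : G.LinkedOn S x y :=
  Relation.ReflTransGen.single ⟨e, he, hee⟩

/-- In a vertex of degree 3 incident with three distinct edges, these are all
its edges, and there is no loop at it. -/
lemma edges_at {V E : Type} [Fintype E] (G : Multigraph V E)
    (u : V) (e1 e2 e3 : E) (h12 : e1 ≠ e2) (h13 : e1 ≠ e3) (h23 : e2 ≠ e3)
    (h1 : u ∈ G.ends e1) (h2 : u ∈ G.ends e2) (h3 : u ∈ G.ends e3)
    (hdeg : G.degOn Set.univ u = 3) :
    (∀ e, u ∈ G.ends e → e = e1 ∨ e = e2 ∨ e = e3) ∧ (∀ e, G.ends e ≠ s(u, u)) := by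
  classical
  unfold degOn at hdeg
  have hset : ∀ (p : E → Prop), {e ∈ Set.univ | p e} = {e | p e} := by
    intro p; ext e; simp
  rw [hset, hset] at hdeg
  set S : Set E := {e | u ∈ G.ends e} with hS
  set L : Set E := {e | G.ends e = s(u, u)} with hL
  have hsub : ({e1, e2, e3} : Set E) ⊆ S := by
    rintro e (rfl | rfl | rfl) <;> assumption
  have hcard3 : ({e1, e2, e3} : Set E).ncard = 3 :=
    Set.ncard_eq_three.mpr ⟨e1, e2, e3, h12, h13, h23, rfl⟩
  have h3le : 3 ≤ S.ncard := by
    rw [← hcard3]; exact Set.ncard_le_ncard hsub (Set.toFinite S)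
  have hSle : S.ncard ≤ 3 := by omega
  have hSeq : ({e1, e2, e3} : Set E) = S :=
    Set.eq_of_subset_of_ncard_le hsub (by omega) (Set.toFinite S)
  have hL0 : L = ∅ := by
    rw [← Set.ncard_eq_zero (Set.toFinite L)]; omega
  constructor
  · intro e he
    have : e ∈ S := he
    rw [← hSeq] at this
    simpa using this
  · intro e he
    have : e ∈ L := he
    rw [hL0] at this
    exact this

end Multigraph

/-- The type-II reduction and its reversal. Let `G` be a cubic multigraph with
a double edge `f1, f2` between `v` and `w`, and remaining incident edges
`{a,v}` and `{b,w}` with `a ≠ w`, `b ≠ v`. Let `H` be obtained from `G` by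
deleting `v` and `w` with all four incident edges and adding a new edge
`{a,b}`. If `M'` is a perfect matching of `H` with `{a,b} ∉ M'`, then
`M' ∪ {f1}` is a perfect matching of `G`. Moreover, if `G` is bridgeless then
so is `H`. -/
theorem type_II_reduction {V E : Type} [Fintype V] [Fintype E]
    (G : Multigraph V E)
    (hcubic : G.CubicOn Set.univ Set.univ)
    (v w a b : V) (f1 f2 eav ebw : E)
    (hvw : v ≠ w) (hf12 : f1 ≠ f2)
    (hf1 : G.ends f1 = s(v, w)) (hf2 : G.ends f2 = s(v, w))
    (heav : G.ends eav = s(a, v)) (hebw : G.ends ebw = s(b, w))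
    (haw : a ≠ w) (hbv : b ≠ v)
    (H : Multigraph V (E ⊕ Unit))
    (hH : H = ⟨Sum.elim G.ends (fun _ => s(a, b))⟩)
    (VS : Set V) (hVS : VS = {x | x ≠ v ∧ x ≠ w})
    (ES : Set (E ⊕ Unit))
    (hES : ES = Sum.inl '' {e | e ∉ ({f1, f2, eav, ebw} : Set E)} ∪ Set.range Sum.inr) :
    (∀ M' : Set (E ⊕ Unit), H.IsPerfectMatchingOn VS ES M' → Sum.inr () ∉ M' →
      G.IsPerfectMatchingOn Set.univ Set.univ ({e : E | Sum.inl e ∈ M'} ∪ {f1})) ∧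
    (G.BridgelessOn Set.univ Set.univ → H.BridgelessOn VS ES) := by
    classical
  obtain ⟨-, hdeg⟩ := hcubic
  have hHends : ∀ e : E, H.ends (Sum.inl e) = G.ends e := by intro e; rw [hH]; rfl
  have hHab : H.ends (Sum.inr ()) = s(a, b) := by rw [hH]; rfl
  -- the three edges at v resp. w are pairwise distinct
  have hf1eav : f1 ≠ eav := by
    intro h; rw [h, heav] at hf1
    rcases Sym2.eq_iff.mp hf1 with ⟨h1, h2⟩ | ⟨h1, h2⟩
    · exact hvw h2
    · exact haw h1
  have hf2eav : f2 ≠ eav := by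
    intro h; rw [h, heav] at hf2
    rcases Sym2.eq_iff.mp hf2 with ⟨h1, h2⟩ | ⟨h1, h2⟩
    · exact hvw h2
    · exact haw h1
  have hf1ebw : f1 ≠ ebw := by
    intro h; rw [h, hebw] at hf1
    rcases Sym2.eq_iff.mp hf1 with ⟨h1, h2⟩ | ⟨h1, h2⟩
    · exact hbv h1
    · exact hvw h2.symm
  have hf2ebw : f2 ≠ ebw := by
    intro h; rw [h, hebw] at hf2
    rcases Sym2.eq_iff.mp hf2 with ⟨h1, h2⟩ | ⟨h1, h2⟩
    · exact hbv h1
    · exact hvw h2.symm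
  obtain ⟨hvedges, hvloop⟩ :=
    G.edges_at v f1 f2 eav hf12 hf1eav hf2eav
      (by rw [hf1]; simp) (by rw [hf2]; simp) (by rw [heav]; simp)
      (hdeg v (Set.mem_univ v))
  obtain ⟨hwedges, hwloop⟩ :=
    G.edges_at w f1 f2 ebw hf12 hf1ebw hf2ebw
      (by rw [hf1]; simp) (by rw [hf2]; simp) (by rw [hebw]; simp)
      (hdeg w (Set.mem_univ w))
  have hav : a ≠ v := fun h => hvloop eav (by rw [heav, h])
  have hbw : b ≠ w := fun h => hwloop ebw (by rw [hebw, h])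
  have houtside : ∀ e, e ∉ ({f1, f2, eav, ebw} : Set E) →
      v ∉ G.ends e ∧ w ∉ G.ends e := by
    intro e he
    constructor
    · intro hmem; rcases hvedges e hmem with rfl | rfl | rfl <;> exact he (by simp)
    · intro hmem; rcases hwedges e hmem with rfl | rfl | rfl <;> exact he (by simp)
  have hmem4 : ∀ e : E, Sum.inl e ∈ ES → e ∉ ({f1, f2, eav, ebw} : Set E) := by
    intro e he; rw [hES] at he
    rcases he with ⟨e', he', heq⟩ | ⟨u, hu⟩
    · cases heq; exact he'
    · simp at hu
  constructor
  · -- perfect matching part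
    intro M' hM' hnr
    obtain ⟨hMsub, hMloop, hMmatch⟩ := hM'
    refine ⟨fun _ _ => Set.mem_univ _, ?_, ?_⟩
    · rintro e (he | rfl)
      · have := hMloop _ he
        rwa [hHends] at this
      · rw [hf1, Sym2.mk_isDiag_iff]; exact hvw
    · intro u _
      by_cases huv : u = v
      · subst huv
        refine ⟨f1, ⟨Or.inr rfl, by rw [hf1]; simp⟩, ?_⟩
        rintro e ⟨(he | rfl), hue⟩
        · exfalso
          have h4 := hmem4 e (hMsub he)
          rcases hvedges e hue with rfl | rfl | rfl <;> exact h4 (by simp)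
        · rfl
      · by_cases huw : u = w
        · subst huw
          refine ⟨f1, ⟨Or.inr rfl, by rw [hf1]; simp⟩, ?_⟩
          rintro e ⟨(he | rfl), hue⟩
          · exfalso
            have h4 := hmem4 e (hMsub he)
            rcases hwedges e hue with rfl | rfl | rfl <;> exact h4 (by simp)
          · rfl
        · have hu : u ∈ VS := by rw [hVS]; exact ⟨huv, huw⟩
          obtain ⟨e', ⟨he', hue'⟩, huniq⟩ := hMmatch u hu
          cases e' with
          | inr u' => exact absurd he' (by cases u'; exact hnr)
          | inl e =>
            refine ⟨e, ⟨Or.inl he', by rw [← hHends]; exact hue'⟩, ?_⟩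
            rintro e2 ⟨(he2 | rfl), hue2⟩
            · have := huniq (Sum.inl e2) ⟨he2, by rw [hHends]; exact hue2⟩
              exact Sum.inl.inj this
            · exfalso; rw [hf1] at hue2
              rcases Sym2.mem_iff.mp hue2 with rfl | rfl
              · exact huv rfl
              · exact huw rfl
  · -- bridgeless part
    intro hGbl f hbr
    obtain ⟨hfES, x, hx, y, hy, hlink, hnot⟩ := hbr
    rw [hVS] at hx hy
    have hab : G.LinkedOn Set.univ a b := by
      refine (Multigraph.step_single (Set.mem_univ eav) heav).trans ?_
      refine (Multigraph.step_single (Set.mem_univ f1) hf1).trans ?_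
      exact Multigraph.step_single (Set.mem_univ ebw) (hebw.trans (Sym2.eq_swap))
    have htrans : G.LinkedOn Set.univ x y := by
      have h := Multigraph.linkedOn_lift' (G := H) (G' := G) (S' := Set.univ) id
        ?_ hlink
      · simpa using h
      · rintro p q ⟨e, heES, hee⟩
        cases e with
        | inl e =>
          exact Multigraph.step_single (Set.mem_univ e) (by rw [← hHends]; exact hee)
        | inr u =>
          cases u
          rw [hHab] at hee
          rcases Sym2.eq_iff.mp hee with ⟨rfl, rfl⟩ | ⟨rfl, rfl⟩
          · simpa using hab
          · simpa using Multigraph.linkedOn_symm hab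
    have hgb : ∀ g : E, G.LinkedOn (Set.univ \ {g}) x y := by
      intro g
      by_contra hcon
      exact hGbl g ⟨Set.mem_univ g, x, Set.mem_univ x, y, Set.mem_univ y, htrans, hcon⟩
    cases f with
    | inr u =>
      cases u
      set π : V → V := fun z => if z = v ∨ z = w then b else z with hπ
      have hπfix : ∀ z, z ≠ v → z ≠ w → π z = z := by
        intro z h1 h2; simp [hπ, h1, h2]
      have hkey : ∀ p q, G.Step (Set.univ \ {eav}) p q →
          H.LinkedOn (ES \ {Sum.inr ()}) (π p) (π q) := by
        rintro p q ⟨e, he, hee⟩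
        have hne : e ≠ eav := by
          intro h; exact he.2 (by rw [h]; rfl)
        by_cases h4 : e ∈ ({f1, f2, eav, ebw} : Set E)
        · have hpq : π p = π q := by
            rcases h4 with rfl | rfl | rfl | rfl
            · rw [hf1] at hee
              rcases Sym2.eq_iff.mp hee with ⟨rfl, rfl⟩ | ⟨rfl, rfl⟩ <;> simp [hπ]
            · rw [hf2] at hee
              rcases Sym2.eq_iff.mp hee with ⟨rfl, rfl⟩ | ⟨rfl, rfl⟩ <;> simp [hπ]
            · exact absurd rfl hne
            · rw [hebw] at hee
              rcases Sym2.eq_iff.mp hee with ⟨rfl, rfl⟩ | ⟨rfl, rfl⟩ <;>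
                simp [hπ, hbv, hbw]
          rw [hpq]
          exact Relation.ReflTransGen.refl
        · have hpmem : p ∈ G.ends e := by rw [hee]; simp
          have hqmem : q ∈ G.ends e := by rw [hee]; simp
          obtain ⟨hnv, hnw⟩ := houtside e h4
          rw [hπfix p (fun h => hnv (h ▸ hpmem)) (fun h => hnw (h ▸ hpmem)),
            hπfix q (fun h => hnv (h ▸ hqmem)) (fun h => hnw (h ▸ hqmem))]
          exact Multigraph.step_single (e := Sum.inl e)
            ⟨by rw [hES]; exact Or.inl ⟨e, h4, rfl⟩, by simp⟩
            (by rw [hHends]; exact hee)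
      have h := Multigraph.linkedOn_lift' (G := G) (G' := H) π hkey (hgb eav)
      rw [hπfix x hx.1 hx.2, hπfix y hy.1 hy.2] at h
      exact hnot h
    | inl e0 =>
      have he04 : e0 ∉ ({f1, f2, eav, ebw} : Set E) := hmem4 e0 hfES
      set π : V → V := fun z => if z = v then a else if z = w then b else z with hπ
      have hπfix : ∀ z, z ≠ v → z ≠ w → π z = z := by
        intro z h1 h2; simp [hπ, h1, h2]
      have hπv : π v = a := by simp [hπ]
      have hπw : π w = b := by simp [hπ, Ne.symm hvw]
      have hπa : π a = a := hπfix a hav haw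
      have hπb : π b = b := hπfix b hbv hbw
      have habH : H.LinkedOn (ES \ {Sum.inl e0}) a b := by
        refine Multigraph.step_single ⟨?_, by simp⟩ hHab
        rw [hES]; exact Or.inr ⟨(), rfl⟩
      have hkey : ∀ p q, G.Step (Set.univ \ {e0}) p q →
          H.LinkedOn (ES \ {Sum.inl e0}) (π p) (π q) := by
        rintro p q ⟨e, he, hee⟩
        have hne : e ≠ e0 := by
          intro h; exact he.2 (by rw [h]; rfl)
        by_cases h4 : e ∈ ({f1, f2, eav, ebw} : Set E)
        · rcases h4 with rfl | rfl | rfl | rfl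
          · rw [hf1] at hee
            rcases Sym2.eq_iff.mp hee with ⟨rfl, rfl⟩ | ⟨rfl, rfl⟩
            · rw [hπv, hπw]; exact habH
            · rw [hπv, hπw]; exact Multigraph.linkedOn_symm habH
          · rw [hf2] at hee
            rcases Sym2.eq_iff.mp hee with ⟨rfl, rfl⟩ | ⟨rfl, rfl⟩
            · rw [hπv, hπw]; exact habH
            · rw [hπv, hπw]; exact Multigraph.linkedOn_symm habH
          · rw [heav] at hee
            rcases Sym2.eq_iff.mp hee with ⟨rfl, rfl⟩ | ⟨rfl, rfl⟩
            · rw [hπa, hπv]; exact Relation.ReflTransGen.refl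
            · rw [hπa, hπv]; exact Relation.ReflTransGen.refl
          · rw [hebw] at hee
            rcases Sym2.eq_iff.mp hee with ⟨rfl, rfl⟩ | ⟨rfl, rfl⟩
            · rw [hπb, hπw]; exact Relation.ReflTransGen.refl
            · rw [hπb, hπw]; exact Relation.ReflTransGen.refl
        · have hpmem : p ∈ G.ends e := by rw [hee]; simp
          have hqmem : q ∈ G.ends e := by rw [hee]; simp
          obtain ⟨hnv, hnw⟩ := houtside e h4
          rw [hπfix p (fun h => hnv (h ▸ hpmem)) (fun h => hnw (h ▸ hpmem)),
            hπfix q (fun h => hnv (h ▸ hqmem)) (fun h => hnw (h ▸ hqmem))]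
          exact Multigraph.step_single (e := Sum.inl e)
            ⟨by rw [hES]; exact Or.inl ⟨e, h4, rfl⟩, by simp [hne]⟩
            (by rw [hHends]; exact hee)
      have h := Multigraph.linkedOn_lift' (G := G) (G' := H) π hkey (hgb e0)
      rw [hπfix x hx.1 hx.2, hπfix y hy.1 hy.2] at h
      exact hnot h
end

section
/- Let M be a perfect matching of a cubic graph G. Then the edge set of G can be partitioned into paths of length exactly 3 (a P4-decomposition). -/
namespace Multigraph

/-- `P` is a path with exactly `3` edges (a `P4`). -/
def IsP4 {V E : Type} (G : Multigraph V E) (P : Set E) : Prop :=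
  ∃ (v0 v1 v2 v3 : V) (e1 e2 e3 : E),
    v0 ≠ v1 ∧ v0 ≠ v2 ∧ v0 ≠ v3 ∧ v1 ≠ v2 ∧ v1 ≠ v3 ∧ v2 ≠ v3 ∧
    e1 ≠ e2 ∧ e1 ≠ e3 ∧ e2 ≠ e3 ∧
    P = {e1, e2, e3} ∧
    G.ends e1 = s(v0, v1) ∧ G.ends e2 = s(v1, v2) ∧ G.ends e3 = s(v2, v3)

end Multigraph



private lemma invol_split {Y : Type} (g : Y → Y) (hg : ∀ y, g (g y) = y)
    (hg' : ∀ y, g y ≠ y) : ∃ T : Set Y, ∀ y, g y ∈ T ↔ y ∉ T := by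
  letI s : Setoid Y := ⟨fun a b => b = a ∨ b = g a, by
    constructor
    · intro a; left; rfl
    · rintro a b (rfl | rfl)
      · left; rfl
      · right; exact (hg a).symm
    · rintro a b c (rfl | rfl) h
      · exact h
      · rcases h with rfl | rfl
        · right; rfl
        · left; exact hg a⟩
  refine ⟨{y | (⟦y⟧ : Quotient s).out = y}, fun y => ?_⟩
  have hy : (⟦y⟧ : Quotient s).out = y ∨ (⟦y⟧ : Quotient s).out = g y := by
    have h := Quotient.mk_out (s := s) y
    rcases h with h | h
    · exact Or.inl h.symm
    · right; conv_rhs => rw [h, hg]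
  have hq : (⟦g y⟧ : Quotient s) = ⟦y⟧ := Quotient.sound (Or.inr (hg y).symm)
  simp only [Set.mem_setOf_eq, hq]
  rcases hy with h | h
  · rw [h]
    exact ⟨fun hh => absurd hh.symm (hg' y), fun hh => absurd rfl hh⟩
  · rw [h]
    exact ⟨fun _ => hg' y, fun _ => rfl⟩

private lemma exists_flip_set {X : Type} (a b : X → X)
    (ha : Function.Involutive a) (hb : Function.Involutive b)
    (ha' : ∀ x, a x ≠ x) (hb' : ∀ x, b x ≠ x) :
    ∃ S : Set X, (∀ x, a x ∈ S ↔ x ∉ S) ∧ (∀ x, b x ∈ S ↔ x ∉ S) := by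
  set A : Equiv.Perm X := ha.toPerm with hAdef
  set B : Equiv.Perm X := hb.toPerm with hBdef
  have hAx : ∀ x, A x = a x := fun x => rfl
  have hBx : ∀ x, B x = b x := fun x => rfl
  set φ : Equiv.Perm X := A * B with hφdef
  have hAA : A * A = 1 := by ext x; simp [Equiv.Perm.mul_apply, hAx, ha x]
  have hBB : B * B = 1 := by ext x; simp [Equiv.Perm.mul_apply, hBx, hb x]
  have hAi : A = A⁻¹ := eq_inv_of_mul_eq_one_left hAA
  have hBi : B = B⁻¹ := eq_inv_of_mul_eq_one_left hBB
  have hφinv : φ⁻¹ = B * A := by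
    rw [hφdef, mul_inv_rev, ← hAi, ← hBi]
  have hconj : ∀ k : ℤ, A * φ ^ k = φ ^ (-k) * A := by
    intro k
    have h1 : A * φ * A⁻¹ = φ⁻¹ := by
      rw [hφinv, ← hAi, hφdef, ← mul_assoc, hAA, one_mul]
    have h2 := map_zpow (MulAut.conj A) φ k
    simp only [MulAut.conj_apply, h1] at h2
    rw [inv_zpow, ← zpow_neg] at h2
    exact mul_inv_eq_iff_eq_mul.mp h2
  have hB : B = A * φ := by rw [hφdef, ← mul_assoc, hAA, one_mul]
  have hkey : ∀ (x : X) (k : ℤ), (φ ^ k) x ≠ A x := by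
    intro x k h
    rcases Int.even_or_odd k with ⟨i, hi⟩ | ⟨i, hi⟩
    · apply ha' ((φ ^ i) x)
      have e1 : A ((φ ^ i) x) = (φ ^ (-i)) (A x) := by
        rw [← Equiv.Perm.mul_apply, hconj, Equiv.Perm.mul_apply]
      have e2 : (φ ^ (-i)) (A x) = (φ ^ i) x := by
        rw [← h, ← Equiv.Perm.mul_apply, ← zpow_add,
          show -i + k = i from by omega]
      rw [← hAx, e1, e2]
    · apply hb' ((φ ^ i) x)
      have e0 : B ((φ ^ i) x) = A ((φ ^ (i + 1)) x) := by
        rw [hB, Equiv.Perm.mul_apply]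
        congr 1
        show (φ * φ ^ i) x = (φ ^ (i + 1)) x
        rw [show φ * φ ^ i = φ ^ (i + 1) from by rw [add_comm, zpow_one_add]]
      have e1 : A ((φ ^ (i + 1)) x) = (φ ^ (-(i + 1))) (A x) := by
        rw [← Equiv.Perm.mul_apply, hconj, Equiv.Perm.mul_apply]
      have e2 : (φ ^ (-(i + 1))) (A x) = (φ ^ i) x := by
        rw [← h, ← Equiv.Perm.mul_apply, ← zpow_add,
          show -(i + 1) + k = i from by omega]
      rw [← hBx, e0, e1, e2]
  letI s : Setoid X := ⟨fun x y => ∃ k : ℤ, (φ ^ k) x = y, by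
    constructor
    · exact fun x => ⟨0, by simp⟩
    · rintro x y ⟨k, rfl⟩
      exact ⟨-k, by rw [← Equiv.Perm.mul_apply, ← zpow_add]; simp⟩
    · rintro x y z ⟨k, rfl⟩ ⟨l, rfl⟩
      exact ⟨k + l, by rw [← Equiv.Perm.mul_apply, ← zpow_add, add_comm]⟩⟩
  have hcompat : ∀ x y, x ≈ y → (A x : X) ≈ A y := by
    rintro x y ⟨k, rfl⟩
    exact ⟨-k, by rw [← Equiv.Perm.mul_apply, ← hconj, Equiv.Perm.mul_apply]⟩
  set Abar : Quotient s → Quotient s := Quotient.map A hcompat with hAbar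
  have hAbar_mk : ∀ x : X, Abar ⟦x⟧ = ⟦A x⟧ := fun x => rfl
  have hAbar_inv : ∀ c, Abar (Abar c) = c := by
    intro c
    induction c using Quotient.ind with
    | _ x => rw [hAbar_mk, hAbar_mk]; congr 1; rw [hAx, hAx]; exact ha x
  have hAbar_fpf : ∀ c, Abar c ≠ c := by
    intro c
    induction c using Quotient.ind with
    | _ x =>
      rw [hAbar_mk]
      intro hc
      obtain ⟨k, hk⟩ := Quotient.exact hc
      have : A x = (φ ^ (-k)) x := by
        conv_rhs => rw [← hk]
        rw [← Equiv.Perm.mul_apply, ← zpow_add]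
        simp
      exact hkey x (-k) this.symm
  obtain ⟨T, hT⟩ := invol_split Abar hAbar_inv hAbar_fpf
  refine ⟨{x | (⟦x⟧ : Quotient s) ∈ T}, fun x => ?_, fun x => ?_⟩
  · have h1 : Abar ⟦x⟧ = ⟦a x⟧ := rfl
    simp only [Set.mem_setOf_eq, ← h1]
    exact hT _
  · have h1 : Abar ⟦φ x⟧ = ⟦b x⟧ := by
      rw [hAbar_mk]
      congr 1
      rw [hAx]
      show a (φ x) = b x
      have hx : φ x = a (b x) := rfl
      rw [hx, ha (b x)]
    have h2 : (⟦φ x⟧ : Quotient s) = ⟦x⟧ :=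
      Quotient.sound ⟨-1, by rw [zpow_neg_one]; exact φ.symm_apply_apply x⟩
    simp only [Set.mem_setOf_eq, ← h1, h2]
    exact hT _

/-- **Kotzig's theorem.** Let `M` be a perfect matching of a simple cubic
graph `G`. Then the edge set of `G` can be partitioned into paths of length
exactly `3` (a `P4`-decomposition). -/
theorem p4_decomposition {V E : Type} (G : Multigraph V E)
    (hsimple : (∀ e : E, ¬ (G.ends e).IsDiag) ∧ Function.Injective G.ends)
    (hcubic : G.CubicOn Set.univ Set.univ)
    (M : Set E) (hM : G.IsPerfectMatchingOn Set.univ Set.univ M) :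
    ∃ D : Set (Set E), (∀ P ∈ D, G.IsP4 P) ∧ ∀ e : E, ∃! P, P ∈ D ∧ e ∈ P := by
  classical
  obtain ⟨hnl, hinj⟩ := hsimple
  have hdeg : ∀ v, G.degOn Set.univ v = 3 := fun v => hcubic.2 v (Set.mem_univ v)
  obtain ⟨hMsub, hMnd, hMvv⟩ := hM
  have hMv : ∀ v : V, ∃! e, e ∈ M ∧ v ∈ G.ends e := fun v => hMvv v (Set.mem_univ v)
  have hrep : ∀ z : Sym2 V, ∃ x y, z = s(x, y) := fun z => Sym2.ind (fun x y => ⟨x, y, rfl⟩) z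
  have hne : ∀ (f : E) (x y : V), G.ends f = s(x, y) → x ≠ y := by
    intro f x y h hxy
    exact hnl f (by rw [h]; exact Sym2.mk_isDiag_iff.mpr hxy)
  have hmeml : ∀ (f : E) (x y : V), G.ends f = s(x, y) → x ∈ G.ends f := by
    intro f x y h; rw [h]; exact Sym2.mem_mk_left x y
  have hmemr : ∀ (f : E) (x y : V), G.ends f = s(x, y) → y ∈ G.ends f := by
    intro f x y h; rw [h]; exact Sym2.mem_mk_right x y
  -- each vertex has exactly two non-matching edges
  have hIv : ∀ v : V, ∃ f g, f ≠ g ∧ ∀ e, (e ∉ M ∧ v ∈ G.ends e) ↔ (e = f ∨ e = g) := by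
    intro v
    have h3 : {e : E | v ∈ G.ends e}.ncard = 3 := by
      have hd := hdeg v
      unfold Multigraph.degOn at hd
      rw [Set.sep_univ, Set.sep_univ] at hd
      have h0 : {e : E | G.ends e = s(v, v)} = ∅ := by
        ext e
        simp only [Set.mem_setOf_eq, Set.mem_empty_iff_false, iff_false]
        intro h
        exact hne e v v h rfl
      rw [h0, Set.ncard_empty] at hd
      omega
    obtain ⟨p, q, r, hpq, hpr, hqr, habc⟩ := Set.ncard_eq_three.mp h3
    obtain ⟨m, ⟨hmM, hmv⟩, hmu⟩ := hMv v
    have hm_mem : m ∈ ({p, q, r} : Set E) := by rw [← habc]; exact hmv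
    have hset : ∀ e, (e ∉ M ∧ v ∈ G.ends e) ↔ (e ∈ ({p, q, r} : Set E) ∧ e ≠ m) := by
      intro e
      constructor
      · rintro ⟨heM, hev⟩
        refine ⟨by rw [← habc]; exact hev, ?_⟩
        rintro rfl; exact heM hmM
      · rintro ⟨hep, hem⟩
        have hev : v ∈ G.ends e := by
          have : e ∈ {e : E | v ∈ G.ends e} := by rw [habc]; exact hep
          exact this
        exact ⟨fun heM => hem (hmu e ⟨heM, hev⟩), hev⟩
    simp only [Set.mem_insert_iff, Set.mem_singleton_iff] at hm_mem
    rcases hm_mem with rfl | rfl | rfl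
    · refine ⟨q, r, hqr, fun e => ?_⟩
      rw [hset e]
      simp only [Set.mem_insert_iff, Set.mem_singleton_iff]
      constructor
      · rintro ⟨(rfl | rfl | rfl), hne2⟩
        · exact absurd rfl hne2
        · exact Or.inl rfl
        · exact Or.inr rfl
      · rintro (rfl | rfl)
        · exact ⟨Or.inr (Or.inl rfl), Ne.symm hpq⟩
        · exact ⟨Or.inr (Or.inr rfl), Ne.symm hpr⟩
    · refine ⟨p, r, hpr, fun e => ?_⟩
      rw [hset e]
      simp only [Set.mem_insert_iff, Set.mem_singleton_iff]
      constructor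
      · rintro ⟨(rfl | rfl | rfl), hne2⟩
        · exact Or.inl rfl
        · exact absurd rfl hne2
        · exact Or.inr rfl
      · rintro (rfl | rfl)
        · exact ⟨Or.inl rfl, hpq⟩
        · exact ⟨Or.inr (Or.inr rfl), Ne.symm hqr⟩
    · refine ⟨p, q, hpq, fun e => ?_⟩
      rw [hset e]
      simp only [Set.mem_insert_iff, Set.mem_singleton_iff]
      constructor
      · rintro ⟨(rfl | rfl | rfl), hne2⟩
        · exact Or.inl rfl
        · exact Or.inr rfl
        · exact absurd rfl hne2
      · rintro (rfl | rfl)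
        · exact ⟨Or.inl rfl, hpr⟩
        · exact ⟨Or.inr (Or.inl rfl), hqr⟩
  -- incidence pairs
  let X := {pp : V × E // pp.2 ∉ M ∧ pp.1 ∈ G.ends pp.2}
  have hα : ∀ p : X, ∃ q : X, q.1.2 = p.1.2 ∧ G.ends p.1.2 = s(p.1.1, q.1.1) := by
    rintro ⟨⟨v, f⟩, hf, hv⟩
    exact ⟨⟨(Sym2.Mem.other hv, f), hf, Sym2.other_mem hv⟩, rfl, (Sym2.other_spec hv).symm⟩
  choose αf hαe hαv using hα
  have hβ : ∀ p : X, ∃ q : X, q.1.1 = p.1.1 ∧ q.1.2 ≠ p.1.2 ∧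
      ∀ e, e ∉ M → p.1.1 ∈ G.ends e → e ≠ p.1.2 → e = q.1.2 := by
    rintro ⟨⟨v, f⟩, hf, hv⟩
    obtain ⟨x, y, hxy, hiff⟩ := hIv v
    have hx := (hiff x).mpr (Or.inl rfl)
    have hy := (hiff y).mpr (Or.inr rfl)
    rcases (hiff f).mp ⟨hf, hv⟩ with rfl | rfl
    · refine ⟨⟨(v, y), hy.1, hy.2⟩, rfl, Ne.symm hxy, ?_⟩
      intro e heM hev hef
      rcases (hiff e).mp ⟨heM, hev⟩ with rfl | rfl
      · exact absurd rfl hef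
      · rfl
    · refine ⟨⟨(v, x), hx.1, hx.2⟩, rfl, hxy, ?_⟩
      intro e heM hev hef
      rcases (hiff e).mp ⟨heM, hev⟩ with rfl | rfl
      · rfl
      · exact absurd rfl hef
  choose βf hβv hβne hβu using hβ
  have hαinv : Function.Involutive αf := by
    intro p
    have h1 := hαv p
    have h2 := hαv (αf p)
    rw [hαe p, h1] at h2
    have hvne := hne _ _ _ h1
    have hveq : (αf (αf p)).1.1 = p.1.1 := by
      rcases Sym2.eq_iff.mp h2 with ⟨h3, _⟩ | ⟨h3, _⟩
      · exact absurd h3 hvne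
      · exact h3.symm
    exact Subtype.ext (Prod.ext_iff.mpr ⟨hveq, (hαe (αf p)).trans (hαe p)⟩)
  have hβinv : Function.Involutive βf := by
    intro p
    have hveq : (βf (βf p)).1.1 = p.1.1 := (hβv (βf p)).trans (hβv p)
    have heeq : p.1.2 = (βf (βf p)).1.2 := by
      refine hβu (βf p) p.1.2 p.2.1 ?_ (Ne.symm (hβne p))
      rw [hβv p]; exact p.2.2
    exact Subtype.ext (Prod.ext_iff.mpr ⟨hveq, heeq.symm⟩)
  have hαfpf : ∀ p, αf p ≠ p := by
    intro p h
    exact hne _ _ _ (hαv p) (by rw [h])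
  have hβfpf : ∀ p, βf p ≠ p := by
    intro p h
    exact hβne p (by rw [h])
  obtain ⟨S, hSα, hSβ⟩ := exists_flip_set αf βf hαinv hβinv hαfpf hβfpf
  let SS : V → E → Prop := fun v f => ∃ h : f ∉ M ∧ v ∈ G.ends f, (⟨(v, f), h⟩ : X) ∈ S
  have hSSmem : ∀ (v : V) (f : E) (h : f ∉ M ∧ v ∈ G.ends f),
      SS v f ↔ (⟨(v, f), h⟩ : X) ∈ S := by
    intro v f h
    exact ⟨fun ⟨h', hh⟩ => by rwa [proof_irrel h' h] at hh, fun hh => ⟨h, hh⟩⟩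
  have hSSα : ∀ (f : E) (x y : V), f ∉ M → G.ends f = s(x, y) → (SS x f ↔ ¬ SS y f) := by
    intro f x y hf hxy
    have hx : x ∈ G.ends f := hmeml f x y hxy
    have hy : y ∈ G.ends f := hmemr f x y hxy
    have hαp : αf ⟨(x, f), hf, hx⟩ = ⟨(y, f), hf, hy⟩ := by
      have h1 := hαv ⟨(x, f), hf, hx⟩
      have h2 : (αf ⟨(x, f), hf, hx⟩).1.1 = y := by
        rcases Sym2.eq_iff.mp (h1.symm.trans hxy) with ⟨_, h⟩ | ⟨hx1, _⟩
        · exact h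
        · exact absurd hx1 (hne f x y hxy)
      exact Subtype.ext (Prod.ext_iff.mpr ⟨h2, hαe ⟨(x, f), hf, hx⟩⟩)
    have hflip := hSα ⟨(x, f), hf, hx⟩
    rw [hαp] at hflip
    rw [hSSmem x f ⟨hf, hx⟩, hSSmem y f ⟨hf, hy⟩]
    tauto
  have hSSβ : ∀ (v : V) (f g : E), f ∉ M → g ∉ M → v ∈ G.ends f → v ∈ G.ends g →
      f ≠ g → (SS v f ↔ ¬ SS v g) := by
    intro v f g hf hg hvf hvg hfg
    have hβp : βf ⟨(v, f), hf, hvf⟩ = ⟨(v, g), hg, hvg⟩ := by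
      have h2 : g = (βf ⟨(v, f), hf, hvf⟩).1.2 :=
        hβu ⟨(v, f), hf, hvf⟩ g hg hvg (Ne.symm hfg)
      exact Subtype.ext (Prod.ext_iff.mpr ⟨hβv ⟨(v, f), hf, hvf⟩, h2.symm⟩)
    have hflip := hSβ ⟨(v, f), hf, hvf⟩
    rw [hβp] at hflip
    rw [hSSmem v f ⟨hf, hvf⟩, hSSmem v g ⟨hg, hvg⟩]
    tauto
  -- the out-edge of each vertex
  have hout : ∀ v : V, ∃! f, (f ∉ M ∧ v ∈ G.ends f) ∧ SS v f := by
    intro v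
    obtain ⟨x, y, hxy, hiff⟩ := hIv v
    have hx := (hiff x).mpr (Or.inl rfl)
    have hy := (hiff y).mpr (Or.inr rfl)
    have hflip := hSSβ v x y hx.1 hy.1 hx.2 hy.2 hxy
    by_cases hSx : SS v x
    · refine ⟨x, ⟨hx, hSx⟩, ?_⟩
      rintro f ⟨hfc, hSf⟩
      rcases (hiff f).mp hfc with rfl | rfl
      · rfl
      · exact absurd hSf (hflip.mp hSx)
    · have hSy : SS v y := by
        by_contra hc
        exact hSx (hflip.mpr hc)
      refine ⟨y, ⟨hy, hSy⟩, ?_⟩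
      rintro f ⟨hfc, hSf⟩
      rcases (hiff f).mp hfc with rfl | rfl
      · exact absurd hSf hSx
      · rfl
  choose out hout1 hout2 using hout
  have houtM : ∀ v, out v ∉ M := fun v => (hout1 v).1.1
  have houtI : ∀ v, v ∈ G.ends (out v) := fun v => (hout1 v).1.2
  have houtS : ∀ v, SS v (out v) := fun v => (hout1 v).2
  have hout_eq : ∀ v f, f ∉ M → v ∈ G.ends f → SS v f → f = out v :=
    fun v f h1 h2 h3 => hout2 v f ⟨⟨h1, h2⟩, h3⟩
  -- the matching edge of each vertex
  choose me hme1 hme2 using hMv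
  -- orientation facts
  have hori : ∀ (f : E) (x y : V), f ∉ M → G.ends f = s(x, y) → out x = f ∨ out y = f := by
    intro f x y hf hxy
    by_cases h1 : SS x f
    · exact Or.inl (hout_eq x f hf (hmeml f x y hxy) h1).symm
    · have h2 : SS y f := by
        by_contra hc
        exact h1 ((hSSα f x y hf hxy).mpr hc)
      exact Or.inr (hout_eq y f hf (hmemr f x y hxy) h2).symm
  have htri : ∀ (e : E) (u w : V), e ∈ M → G.ends e = s(u, w) →
      ∀ c : V, G.ends (out u) = s(u, c) → G.ends (out w) = s(w, c) → False := by
    intro e u w heM hew c huc hwc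
    have huw : u ≠ w := hne e u w hew
    have hfg : out u ≠ out w := by
      intro h
      rw [h] at huc
      rcases Sym2.eq_iff.mp (huc.symm.trans hwc) with ⟨h1, _⟩ | ⟨h1, _⟩
      · exact huw h1
      · exact hne (out w) u c huc h1
    have h1 : ¬ SS c (out u) := (hSSα (out u) u c (houtM u) huc).mp (houtS u)
    have h2 : SS c (out w) := by
      by_contra hc
      exact h1 ((hSSβ c (out u) (out w) (houtM u) (houtM w)
        (hmemr (out u) u c huc) (hmemr (out w) w c hwc) hfg).mpr hc)
    exact (hSSα (out w) w c (houtM w) hwc).mp (houtS w) h2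
  -- the decomposition
  set D : Set (Set E) :=
    {P | ∃ e ∈ M, ∃ u w, G.ends e = s(u, w) ∧ P = ({out u, e, out w} : Set E)} with hD
  have hDmem : ∀ P, P ∈ D ↔
      ∃ e ∈ M, ∃ u w, G.ends e = s(u, w) ∧ P = ({out u, e, out w} : Set E) := by
    intro P; rw [hD]; exact Iff.rfl
  refine ⟨D, ?_, ?_⟩
  · -- every element of D is a P4
    intro P hP
    rw [hDmem] at hP
    obtain ⟨e, heM, u, w, hew, rfl⟩ := hP
    obtain ⟨a, ha⟩ : ∃ a, G.ends (out u) = s(u, a) :=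
      ⟨Sym2.Mem.other (houtI u), (Sym2.other_spec (houtI u)).symm⟩
    obtain ⟨b, hb⟩ : ∃ b, G.ends (out w) = s(w, b) :=
      ⟨Sym2.Mem.other (houtI w), (Sym2.other_spec (houtI w)).symm⟩
    have huw : u ≠ w := hne e u w hew
    have hau : u ≠ a := hne (out u) u a ha
    have hbw : w ≠ b := hne (out w) w b hb
    have hfe : out u ≠ e := fun h => houtM u (h ▸ heM)
    have hge : out w ≠ e := fun h => houtM w (h ▸ heM)
    have haw : a ≠ w := by
      rintro rfl
      exact hfe (hinj (ha.trans hew.symm))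
    have hbu : b ≠ u := by
      rintro rfl
      have : G.ends (out w) = G.ends e := by rw [hb, hew, Sym2.eq_swap]
      exact hge (hinj this)
    have hab : a ≠ b := by
      rintro rfl
      exact htri e u w heM hew a ha hb
    have hfg : out u ≠ out w := by
      intro h
      rw [h] at ha
      rcases Sym2.eq_iff.mp (ha.symm.trans hb) with ⟨h1, _⟩ | ⟨_, h2⟩
      · exact huw h1
      · exact haw h2
    exact ⟨a, u, w, b, out u, e, out w, Ne.symm hau, haw, hab, huw, Ne.symm hbu, hbw,
      hfe, hfg, Ne.symm hge, rfl, by rw [ha, Sym2.eq_swap], hew, hb⟩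
  · -- every edge is in exactly one element of D
    intro e'
    by_cases heM : e' ∈ M
    · obtain ⟨u, w, hew⟩ := hrep (G.ends e')
      refine ⟨{out u, e', out w}, ⟨(hDmem _).mpr ⟨e', heM, u, w, hew, rfl⟩, by simp⟩, ?_⟩
      rintro P ⟨hPD, he'P⟩
      rw [hDmem] at hPD
      obtain ⟨e'', he''M, u', w', hew', rfl⟩ := hPD
      simp only [Set.mem_insert_iff, Set.mem_singleton_iff] at he'P
      have he'e'' : e' = e'' := by
        rcases he'P with h | h | h
        · exact absurd (h ▸ heM) (houtM u')
        · exact h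
        · exact absurd (h ▸ heM) (houtM w')
      subst he'e''
      rcases Sym2.eq_iff.mp (hew'.symm.trans hew) with ⟨rfl, rfl⟩ | ⟨rfl, rfl⟩
      · rfl
      · ext z
        simp only [Set.mem_insert_iff, Set.mem_singleton_iff]
        tauto
    · obtain ⟨x, y, hxy⟩ := hrep (G.ends e')
      have main : ∀ p q : V, G.ends e' = s(p, q) → out p = e' →
          ∃! P, P ∈ D ∧ e' ∈ P := by
        intro p q hpq hop
        obtain ⟨t, ht⟩ : ∃ t, G.ends (me p) = s(p, t) :=
          ⟨Sym2.Mem.other (hme1 p).2, (Sym2.other_spec (hme1 p).2).symm⟩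
        have hmeM := (hme1 p).1
        refine ⟨{out p, me p, out t}, ⟨(hDmem _).mpr ⟨me p, hmeM, p, t, ht, rfl⟩,
          Set.mem_insert_iff.mpr (Or.inl hop.symm)⟩, ?_⟩
        rintro P ⟨hPD, he'P⟩
        rw [hDmem] at hPD
        obtain ⟨e'', he''M, u', w', hew', rfl⟩ := hPD
        simp only [Set.mem_insert_iff, Set.mem_singleton_iff] at he'P
        have hqSS : ¬ SS q e' := (hSSα e' p q heM hpq).mp (hop ▸ houtS p)
        have hz : ∀ z : V, out z = e' → z = p := by
          intro z hoz
          have hzmem : z ∈ G.ends e' := by rw [← hoz]; exact houtI z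
          have hzSS : SS z e' := hoz ▸ houtS z
          rw [hpq] at hzmem
          rcases Sym2.mem_iff.mp hzmem with rfl | rfl
          · rfl
          · exact absurd hzSS hqSS
        rcases he'P with h | h | h
        · have hu'p : u' = p := hz u' h.symm
          subst hu'p
          have he'' : e'' = me u' := hme2 u' e'' ⟨he''M, hmeml e'' u' w' hew'⟩
          subst he''
          have hw't : w' = t := by
            rcases Sym2.eq_iff.mp (hew'.symm.trans ht) with ⟨_, h2⟩ | ⟨h1, _⟩
            · exact h2
            · exact absurd h1 (hne (me u') u' t ht)
          subst hw't
          rfl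
        · exact absurd he''M (by rw [← h]; exact heM)
        · have hw'p : w' = p := hz w' h.symm
          subst hw'p
          have he'' : e'' = me w' := hme2 w' e'' ⟨he''M, hmemr e'' u' w' hew'⟩
          subst he''
          have hu't : u' = t := by
            have hss : s(w', u') = s(w', t) := by rw [Sym2.eq_swap, ← hew']; exact ht
            rcases Sym2.eq_iff.mp hss with ⟨_, h2⟩ | ⟨h1, _⟩
            · exact h2
            · exact absurd h1 (hne (me w') w' t ht)
          subst hu't
          ext z
          simp only [Set.mem_insert_iff, Set.mem_singleton_iff]
          tauto
      rcases hori e' x y heM hxy with h | h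
      · exact main x y hxy h
      · exact main y x (hxy.trans Sym2.eq_swap) h
end
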